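/- The map sending an n×n alternating sign matrix A to the array whose i-th row lists (in increasing order) the columns j with Σ_{k=1}^{i} A(k,j) = 1 is a bijection from n×n alternating sign matrices to monotone triangles of order n. -/

import Mathlib

/-- A vector with entries in `ℤ` is alternating: consecutive nonzero entries have
opposite signs, and the first and last nonzero entries (if any) equal `1`. -/
def Alternating (n : ℕ) (v : Fin n → ℤ) : Prop :=
  (∀ i₁ i₂ : Fin n, i₁ < i₂ → v i₁ ≠ 0 → v i₂ ≠ 0 →
    (∀ i, i₁ < i → i < i₂ → v i = 0) → v i₂ = - v i₁) ∧
  (∀ i₂ : Fin n, v i₂ ≠ 0 → (∀ i, i < i₂ → v i = 0) → v i₂ = 1) ∧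
  (∀ i₁ : Fin n, v i₁ ≠ 0 → (∀ i, i₁ < i → v i = 0) → v i₁ = 1)

/-- `A` is an `n × n` alternating sign matrix: entries in `{-1, 0, 1}`, all row and
column sums equal to `1`, and the nonzero entries of every row and column alternate in
sign, starting and ending with `1`. -/
def IsASM (n : ℕ) (A : Matrix (Fin n) (Fin n) ℤ) : Prop :=
  (∀ i j, A i j = -1 ∨ A i j = 0 ∨ A i j = 1) ∧
  (∀ i : Fin n, ∑ j, A i j = 1) ∧
  (∀ j : Fin n, ∑ i, A i j = 1) ∧
  (∀ i : Fin n, Alternating n (fun j => A i j)) ∧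
  (∀ j : Fin n, Alternating n (fun i => A i j))

/-- `t i j` is the `j`-th entry (0-based) of the `i`-th row (0-based) of a triangular
array; row `i` has entries `t i 0, …, t i i`.  `IsMonotoneTriangle n t` says `t` is a
monotone triangle of order `n`: rows strictly increase, columns weakly increase from
bottom to top, northwest-southeast diagonals weakly increase from top to bottom, and the
bottom row is `1, 2, …, n`. -/
def IsMonotoneTriangle (n : ℕ) (t : ℕ → ℕ → ℕ) : Prop :=
  (∀ i j j', i < n → j < j' → j' ≤ i → t i j < t i j') ∧
  (∀ i i' j, i ≤ i' → i' < n → j ≤ i → t i' j ≤ t i j) ∧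
  (∀ i j d, i + d < n → j ≤ i → t i j ≤ t (i + d) (j + d)) ∧
  (∀ j, j < n → t (n - 1) j = j + 1)

/-- The triangle is gapless: the entries of each column form an interval of integers. -/
def Gapless (n : ℕ) (t : ℕ → ℕ → ℕ) : Prop :=
  ∀ j c, j < n → (∃ i, j ≤ i ∧ i < n ∧ t i j ≤ c) → (∃ i, j ≤ i ∧ i < n ∧ c ≤ t i j) →
    ∃ i, j ≤ i ∧ i < n ∧ t i j = c

/-- Each column of the triangle contains at most two distinct values. -/
def AtMostTwoValues (n : ℕ) (t : ℕ → ℕ → ℕ) : Prop :=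
  ∀ j, j < n → ∃ a b, ∀ i, j ≤ i → i < n → t i j = a ∨ t i j = b

/-- Entries outside the triangular region are normalized to `0`. -/
def Normalized (n : ℕ) (t : ℕ → ℕ → ℕ) : Prop :=
  ∀ i j, n ≤ i ∨ i < j → t i j = 0

/-- The monotone triangle of an ASM `A`: its `i`-th row (0-based) lists, in increasing
order, the 1-based indices of the columns whose partial sum down to row `i` equals `1`;
entries outside the triangle are `0`. -/
noncomputable def triangleOf {n : ℕ} (A : Matrix (Fin n) (Fin n) ℤ) : ℕ → ℕ → ℕ :=
  fun i j =>
    if i < n ∧ j ≤ i then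
      (((Finset.univ.filter (fun c : Fin n =>
            (∑ k ∈ Finset.univ.filter (fun k : Fin n => (k : ℕ) ≤ i), A k c) = 1)).image
          (fun c : Fin n => (c : ℕ) + 1)).sort (· ≤ ·)).getD j 0
    else 0

namespace AsmMT
open Finset

open Finset

/-- `f` is strictly increasing on `{0, …, s-1}`. -/
def StrictOn (f : ℕ → ℕ) (s : ℕ) : Prop := ∀ a b : ℕ, a < b → b < s → f a < f b

lemma StrictOn.injOn {f : ℕ → ℕ} {s : ℕ} (hf : StrictOn f s) :
    Set.InjOn f (Finset.range s) := by
  intro a ha b hb hab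
  simp only [coe_range, Set.mem_Iio] at ha hb
  by_contra hne
  rcases Nat.lt_or_ge a b with h | h
  · exact absurd hab (hf a b h hb).ne
  · rcases Nat.lt_or_ge b a with h' | h'
    · exact absurd hab.symm (hf b a h' ha).ne
    · omega

lemma dc_eq_range (F : Finset ℕ) (h : ∀ a b : ℕ, a ≤ b → b ∈ F → a ∈ F) :
    F = Finset.range F.card := by
  ext j
  simp only [Finset.mem_range]
  constructor
  · intro hj
    have hsub : Finset.range (j + 1) ⊆ F := fun a ha =>
      h a j (Nat.lt_succ_iff.mp (Finset.mem_range.mp ha)) hj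
    have := Finset.card_le_card hsub
    simp only [Finset.card_range] at this
    omega
  · intro hj
    by_contra hcon
    have hsub : F ⊆ Finset.range j := fun b hb =>
      Finset.mem_range.mpr (lt_of_not_ge fun hle => hcon (h j b hle hb))
    have := Finset.card_le_card hsub
    simp only [Finset.card_range] at this
    omega

lemma card_filter_image (f : ℕ → ℕ) (s m : ℕ) (hf : StrictOn f s) :
    ((((range s).image f)).filter (· ≤ m)).card
      = ((range s).filter (fun k => f k ≤ m)).card := by
  rw [Finset.filter_image]
  exact Finset.card_image_of_injOn (hf.injOn.mono (by
    intro x hx; simp only [coe_filter, Set.mem_setOf_eq, mem_range, coe_range, Set.mem_Iio] at hx ⊢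
    exact hx.1))

lemma nth_le_iff {f : ℕ → ℕ} {s : ℕ} (hf : StrictOn f s) {m j : ℕ} (hj : j < s) :
    f j ≤ m ↔ j < (((range s).image f).filter (· ≤ m)).card := by
  rw [card_filter_image f s m hf]
  set F := (range s).filter (fun k => f k ≤ m) with hFdef
  have hdc : ∀ a b : ℕ, a ≤ b → b ∈ F → a ∈ F := by
    intro a b hab hb
    simp only [hFdef, mem_filter, mem_range] at hb ⊢
    rcases eq_or_lt_of_le hab with rfl | h
    · exact hb
    · exact ⟨h.trans hb.1, le_trans (hf a b h hb.1).le hb.2⟩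
  have hr := dc_eq_range F hdc
  constructor
  · intro hle
    have : j ∈ F := by simp [hFdef, hj, hle]
    rw [hr] at this
    exact mem_range.mp this
  · intro hlt
    have : j ∈ F := hr ▸ mem_range.mpr hlt
    exact (mem_filter.mp this).2


open Finset


/-- the `j`-th smallest element of a finset of naturals. -/
noncomputable def enum (S : Finset ℕ) : ℕ → ℕ := fun j => (S.sort (· ≤ ·)).getD j 0

lemma getD_eq_get (l : List ℕ) (j : ℕ) (h : j < l.length) : l.getD j 0 = l.get ⟨j, h⟩ := by
  simp [List.getD_eq_getElem?_getD, List.getElem?_eq_getElem h, List.get_eq_getElem]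

lemma enum_strictOn (S : Finset ℕ) : StrictOn (enum S) S.card := by
  intro a b hab hb
  have hl : (S.sort (· ≤ ·)).length = S.card := Finset.length_sort _
  have ha' : a < (S.sort (· ≤ ·)).length := by omega
  have hb' : b < (S.sort (· ≤ ·)).length := by omega
  have hs := (Finset.sortedLT_sort S).pairwise
  have := hs.rel_get_of_lt (a := ⟨a, ha'⟩) (b := ⟨b, hb'⟩) (by simpa using hab)
  rwa [enum, enum, getD_eq_get _ a ha', getD_eq_get _ b hb']

lemma enum_image (S : Finset ℕ) : (range S.card).image (enum S) = S := by
  ext m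
  have hl : (S.sort (· ≤ ·)).length = S.card := Finset.length_sort _
  simp only [mem_image, mem_range]
  constructor
  · rintro ⟨j, hj, rfl⟩
    have hj' : j < (S.sort (· ≤ ·)).length := by omega
    rw [enum, getD_eq_get _ j hj']
    exact (Finset.mem_sort (α := ℕ) (· ≤ ·)).mp (List.get_mem _ _)
  · intro hm
    have : m ∈ S.sort (· ≤ ·) := (Finset.mem_sort _).mpr hm
    obtain ⟨j, hj⟩ := List.mem_iff_get.mp this
    exact ⟨j.1, by omega, by rw [enum, getD_eq_get _ j.1 j.2, Fin.eta, hj]⟩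

lemma enum_mem (S : Finset ℕ) {j : ℕ} (hj : j < S.card) : enum S j ∈ S := by
  have h : enum S j ∈ (range S.card).image (enum S) :=
    mem_image_of_mem _ (mem_range.mpr hj)
  rwa [enum_image S] at h

lemma nth_le_iff_fin (S : Finset ℕ) {m j : ℕ} (hj : j < S.card) :
    enum S j ≤ m ↔ j < (S.filter (· ≤ m)).card := by
  have := nth_le_iff (enum_strictOn S) (m := m) hj
  rwa [enum_image S] at this

/-- two strictly monotone enumerations of the same set agree -/
lemma enum_eq_of_image {g : ℕ → ℕ} {s : ℕ} (hg : StrictOn g s) {F : Finset ℕ}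
    (him : (range s).image g = F) : ∀ j < s, enum F j = g j := by
  have hcard : F.card = s := by
    rw [← him, Finset.card_image_of_injOn, Finset.card_range]
    intro a ha b hb hab
    simp only [coe_range, Set.mem_Iio] at ha hb
    by_contra hne
    rcases Nat.lt_or_ge a b with h | h
    · exact absurd hab (hg a b h hb).ne
    · rcases Nat.lt_or_ge b a with h' | h'
      · exact absurd hab.symm (hg b a h' ha).ne
      · omega
  intro j hj
  have h1 : enum F j ≤ g j := by
    rw [nth_le_iff_fin F (by omega), ← him]
    exact (nth_le_iff hg (by omega)).mp le_rfl
  have h2 : g j ≤ enum F j := by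
    rw [nth_le_iff hg (by omega), him]
    exact (nth_le_iff_fin F (by omega)).mp le_rfl
  omega

lemma interlace_of_counts {F G : Finset ℕ} {s : ℕ} (hF : F.card = s + 1) (hG : G.card = s)
    (h1 : ∀ m, (G.filter (· ≤ m)).card ≤ (F.filter (· ≤ m)).card)
    (h2 : ∀ m, (F.filter (· ≤ m)).card ≤ (G.filter (· ≤ m)).card + 1) :
    ∀ j < s, enum F j ≤ enum G j ∧ enum G j ≤ enum F (j + 1) := by
  intro j hj
  constructor
  · have hgj : j < (G.filter (· ≤ enum G j)).card :=
      (nth_le_iff_fin G (by omega)).mp le_rfl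
    exact (nth_le_iff_fin F (by omega)).mpr (lt_of_lt_of_le hgj (h1 _))
  · have hfj : j + 1 < (F.filter (· ≤ enum F (j + 1))).card :=
      (nth_le_iff_fin F (by omega)).mp le_rfl
    have := h2 (enum F (j + 1))
    exact (nth_le_iff_fin G (by omega)).mpr (by omega)

lemma counts_of_interlace {F G : Finset ℕ} {s : ℕ} (hF : F.card = s + 1) (hG : G.card = s)
    (hfg : ∀ j < s, enum F j ≤ enum G j) (hgf : ∀ j < s, enum G j ≤ enum F (j + 1)) (m : ℕ) :
    (G.filter (· ≤ m)).card ≤ (F.filter (· ≤ m)).card ∧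
      (F.filter (· ≤ m)).card ≤ (G.filter (· ≤ m)).card + 1 := by
  set k := (G.filter (· ≤ m)).card with hk
  have hks : k ≤ s := by rw [hk, ← hG]; exact Finset.card_filter_le _ _
  have hcfs : (F.filter (· ≤ m)).card ≤ s + 1 := by rw [← hF]; exact Finset.card_filter_le _ _
  constructor
  · rcases Nat.eq_zero_or_pos k with h0 | hpos
    · omega
    · have hk1 : k - 1 < k := by omega
      have hgm : enum G (k - 1) ≤ m := (nth_le_iff_fin G (by omega)).mpr (by omega)
      have hfm : enum F (k - 1) ≤ m := le_trans (hfg (k - 1) (by omega)) hgm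
      have := (nth_le_iff_fin F (by omega)).mp hfm
      omega
  · by_contra hcon
    push_neg at hcon
    have hks' : k < s := by omega
    have hfk1 : enum F (k + 1) ≤ m := (nth_le_iff_fin F (by omega)).mpr (by omega)
    have : enum G k ≤ m := le_trans (hgf k hks') hfk1
    have := (nth_le_iff_fin G (by omega)).mp this
    omega


open Finset

/-- partial sum of the first `m` entries -/
def psum (n : ℕ) (v : Fin n → ℤ) (m : ℕ) : ℤ :=
  ∑ c ∈ univ.filter (fun c : Fin n => (c : ℕ) < m), v c

lemma filter_lt_succ {n m : ℕ} (hm : m < n) :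
    (univ.filter (fun c : Fin n => (c : ℕ) < m + 1))
      = insert ⟨m, hm⟩ (univ.filter (fun c : Fin n => (c : ℕ) < m)) := by
  ext c
  simp only [mem_filter, mem_univ, true_and, mem_insert, Fin.ext_iff]
  omega

lemma psum_zero (n : ℕ) (v : Fin n → ℤ) : psum n v 0 = 0 := by
  rw [psum, Finset.filter_false_of_mem (by intro c _; omega), Finset.sum_empty]

lemma psum_succ {n : ℕ} (v : Fin n → ℤ) {m : ℕ} (hm : m < n) :
    psum n v (m + 1) = psum n v m + v ⟨m, hm⟩ := by
  rw [psum, filter_lt_succ hm, Finset.sum_insert (by simp), psum, add_comm]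

lemma psum_of_ge {n : ℕ} (v : Fin n → ℤ) {m : ℕ} (hm : n ≤ m) :
    psum n v m = ∑ c, v c := by
  rw [psum, Finset.filter_true_of_mem (fun c _ => lt_of_lt_of_le c.isLt hm)]

lemma psum_eq_zero_of {n : ℕ} {v : Fin n → ℤ} {m : ℕ}
    (h : ∀ c : Fin n, (c : ℕ) < m → v c = 0) : psum n v m = 0 :=
  Finset.sum_eq_zero (fun c hc => h c (by simpa using (mem_filter.mp hc).2))

lemma card_filter_lt {n m : ℕ} (hm : m ≤ n) :
    (univ.filter (fun c : Fin n => (c : ℕ) < m)).card = m := by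
  induction m with
  | zero => rw [Finset.filter_false_of_mem (by intro c _; omega)]; simp
  | succ m ih =>
    rw [filter_lt_succ (by omega), Finset.card_insert_of_notMem (by simp), ih (by omega)]

lemma exists_last {n m : ℕ} {v : Fin n → ℤ}
    (h : ∃ k : Fin n, (k : ℕ) < m ∧ v k ≠ 0) :
    ∃ k₀ : Fin n, (k₀ : ℕ) < m ∧ v k₀ ≠ 0 ∧
      ∀ k' : Fin n, (k₀ : ℕ) < (k' : ℕ) → (k' : ℕ) < m → v k' = 0 := by
  classical
  obtain ⟨k, hk1, hk2⟩ := h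
  have hne : (univ.filter (fun k₀ : Fin n => (k₀ : ℕ) < m ∧ v k₀ ≠ 0)).Nonempty :=
    ⟨k, by simp only [mem_filter]; exact ⟨mem_univ _, hk1, hk2⟩⟩
  have hmem := Finset.max'_mem _ hne
  simp only [mem_filter] at hmem
  refine ⟨Finset.max' _ hne, hmem.2.1, hmem.2.2, ?_⟩
  intro k' h1 h2
  by_contra h
  have hle := Finset.le_max' (univ.filter (fun k₀ : Fin n => (k₀ : ℕ) < m ∧ v k₀ ≠ 0)) k'
    (by simp only [mem_filter]; exact ⟨mem_univ _, h2, h⟩)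
  rw [Fin.le_def] at hle
  omega

/-- invariant: partial sum is determined by the sign of the last nonzero entry -/
lemma psum_last {n : ℕ} {v : Fin n → ℤ}
    (hent : ∀ c, v c = -1 ∨ v c = 0 ∨ v c = 1) (halt : Alternating n v) :
    ∀ m : ℕ, ∀ k : Fin n, (k : ℕ) < m → v k ≠ 0 →
      (∀ k' : Fin n, (k : ℕ) < (k' : ℕ) → (k' : ℕ) < m → v k' = 0) →
      psum n v m = if v k = 1 then 1 else 0 := by
  intro m
  induction m with
  | zero => intro k hk; omega
  | succ m ih =>
    intro k hk hk0 hzero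
    by_cases hmn : m < n
    · by_cases hkm : (k : ℕ) = m
      · have hkeq : k = ⟨m, hmn⟩ := Fin.ext hkm
        rw [psum_succ v hmn]
        by_cases hne : ∃ k₀ : Fin n, (k₀ : ℕ) < m ∧ v k₀ ≠ 0
        · obtain ⟨k₀, hk₀m, hk₀0, hzero'⟩ := exists_last hne
          have hps := ih k₀ hk₀m hk₀0 hzero'
          have hvk : v k = -v k₀ := by
            apply halt.1 k₀ k (by rw [Fin.lt_def]; omega) hk₀0 hk0
            intro i hi1 hi2
            exact hzero' i (by rwa [Fin.lt_def] at hi1) (by rw [Fin.lt_def] at hi2; omega)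
          rw [← hkeq, hps]
          rcases hent k₀ with h | h | h
          · rw [h] at hvk ⊢; rw [hvk]; norm_num
          · exact absurd h hk₀0
          · rw [h] at hvk ⊢; rw [hvk]; norm_num
        · push_neg at hne
          have hall : ∀ k' : Fin n, (k' : ℕ) < m → v k' = 0 := by
            intro k' h1
            by_contra h
            exact h (hne k' h1)
          have hps0 : psum n v m = 0 := psum_eq_zero_of hall
          have hv1 : v k = 1 := by
            apply halt.2.1 k hk0
            intro i hi
            exact hall i (by rw [Fin.lt_def] at hi; omega)
          rw [← hkeq, hps0, hv1]
          norm_num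
      · have hkm' : (k : ℕ) < m := by omega
        have hvm : v ⟨m, hmn⟩ = 0 := hzero ⟨m, hmn⟩ (show (k : ℕ) < m by omega) (show m < m + 1 by omega)
        rw [psum_succ v hmn, hvm, add_zero]
        exact ih k hkm' hk0 (fun k' h1 h2 => hzero k' h1 (by omega))
    · have heq : psum n v (m + 1) = psum n v m := by
        rw [psum_of_ge v (by omega), psum_of_ge v (by omega)]
      rw [heq]
      exact ih k (by have := k.isLt; omega) hk0 (fun k' h1 h2 => hzero k' h1 (by omega))

lemma psum_mem {n : ℕ} {v : Fin n → ℤ}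
    (hent : ∀ c, v c = -1 ∨ v c = 0 ∨ v c = 1) (halt : Alternating n v) (m : ℕ) :
    psum n v m = 0 ∨ psum n v m = 1 := by
  by_cases hne : ∃ k₀ : Fin n, (k₀ : ℕ) < m ∧ v k₀ ≠ 0
  · obtain ⟨k₀, hk₀m, hk₀0, hzero'⟩ := exists_last hne
    rw [psum_last hent halt m k₀ hk₀m hk₀0 hzero']
    split <;> simp
  · left
    push_neg at hne
    apply psum_eq_zero_of
    intro c hc
    by_contra h
    exact h (hne c hc)

lemma psum_congr_zero {n : ℕ} {v : Fin n → ℤ} {a : ℕ} :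
    ∀ {b : ℕ}, a ≤ b → b ≤ n →
      (∀ k : Fin n, a ≤ (k : ℕ) → (k : ℕ) < b → v k = 0) → psum n v b = psum n v a := by
  intro b
  induction b with
  | zero => intro h _ _; rw [Nat.le_zero.mp h]
  | succ b ih =>
    intro hab hbn hz
    rcases Nat.eq_or_lt_of_le hab with rfl | h
    · rfl
    · rw [psum_succ v (by omega), hz ⟨b, by omega⟩ (show a ≤ b by omega) (show b < b + 1 by omega),
        add_zero]
      exact ih (by omega) (by omega) (fun k h1 h2 => hz k h1 (by omega))

lemma alternating_of_psum {n : ℕ} {v : Fin n → ℤ}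
    (hps : ∀ m, m ≤ n → psum n v m = 0 ∨ psum n v m = 1)
    (htot : psum n v n = 1) : Alternating n v := by
  have hsucc : ∀ k : Fin n, psum n v ((k : ℕ) + 1) = psum n v (k : ℕ) + v k := by
    intro k
    rw [psum_succ v k.isLt, Fin.eta]
  refine ⟨?_, ?_, ?_⟩
  · intro i₁ i₂ h12 h1 h2 hz
    rw [Fin.lt_def] at h12
    have e2 : psum n v (i₂ : ℕ) = psum n v ((i₁ : ℕ) + 1) := by
      apply psum_congr_zero (by omega) (by have := i₂.isLt; omega)
      intro k hk1 hk2
      exact hz k (by rw [Fin.lt_def]; omega) (by rw [Fin.lt_def]; omega)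
    have e1 := hsucc i₁
    have e3 := hsucc i₂
    rcases hps (i₁ : ℕ) (by have := i₁.isLt; omega) with h | h <;>
      rcases hps ((i₁ : ℕ) + 1) (by have := i₁.isLt; omega) with h' | h' <;>
      rcases hps ((i₂ : ℕ) + 1) (by have := i₂.isLt; omega) with h'' | h'' <;>
      omega
  · intro i₂ h2 hz
    have e2 : psum n v (i₂ : ℕ) = psum n v 0 := by
      apply psum_congr_zero (by omega) (by have := i₂.isLt; omega)
      intro k _ hk2
      exact hz k (by rw [Fin.lt_def]; omega)
    have e0 := psum_zero n v
    have e3 := hsucc i₂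
    rcases hps ((i₂ : ℕ) + 1) (by have := i₂.isLt; omega) with h | h <;> omega
  · intro i₁ h1 hz
    have e2 : psum n v n = psum n v ((i₁ : ℕ) + 1) := by
      apply psum_congr_zero (by have := i₁.isLt; omega) (by omega)
      intro k hk1 _
      exact hz k (by rw [Fin.lt_def]; omega)
    have e1 := hsucc i₁
    rcases hps (i₁ : ℕ) (by have := i₁.isLt; omega) with h | h <;> omega

lemma card_filter_eq_sum {α : Type*} [DecidableEq α] (s : Finset α) (f : α → ℤ)
    (h : ∀ x ∈ s, f x = 0 ∨ f x = 1) :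
    (((s.filter (fun x => f x = 1)).card : ℤ)) = ∑ x ∈ s, f x := by
  classical
  rw [← Finset.sum_filter_add_sum_filter_not s (fun x => f x = 1) f]
  have h1 : ∑ x ∈ s.filter (fun x => f x = 1), f x
      = ((s.filter (fun x => f x = 1)).card : ℤ) := by
    rw [Finset.sum_congr rfl (fun x hx => (mem_filter.mp hx).2), Finset.sum_const,
      nsmul_eq_mul, mul_one]
  have h2 : ∑ x ∈ s.filter (fun x => ¬f x = 1), f x = 0 := by
    apply Finset.sum_eq_zero
    intro x hx
    rcases h x (mem_filter.mp hx).1 with h' | h'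
    · exact h'
    · exact absurd h' (mem_filter.mp hx).2
  rw [h1, h2, add_zero]


open Finset

variable {n : ℕ}

/-- partial column sums of `A` down to row `m - 1` -/
def colPS (A : Matrix (Fin n) (Fin n) ℤ) (m : ℕ) (c : Fin n) : ℤ :=
  psum n (fun k => A k c) m

/-- the set of (1-based) columns whose partial sum down to row `i` equals `1` -/
def rowSet (A : Matrix (Fin n) (Fin n) ℤ) (i : ℕ) : Finset ℕ :=
  (univ.filter (fun c : Fin n => colPS A (i + 1) c = 1)).image (fun c : Fin n => (c : ℕ) + 1)

lemma succ_inj' : Function.Injective (fun c : Fin n => (c : ℕ) + 1) := by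
  intro a b hab
  have : (a : ℕ) + 1 = (b : ℕ) + 1 := hab
  exact Fin.ext (by omega)

lemma sum_le_eq (A : Matrix (Fin n) (Fin n) ℤ) (i : ℕ) (c : Fin n) :
    (∑ k ∈ univ.filter (fun k : Fin n => (k : ℕ) ≤ i), A k c) = colPS A (i + 1) c := by
  unfold colPS psum
  apply Finset.sum_congr _ (fun _ _ => rfl)
  ext k
  simp [Nat.lt_succ_iff]

lemma triangleOf_eq (A : Matrix (Fin n) (Fin n) ℤ) (i j : ℕ) :
    triangleOf A i j = if i < n ∧ j ≤ i then enum (rowSet A i) j else 0 := by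
  unfold triangleOf enum rowSet
  simp only [sum_le_eq]

variable {A : Matrix (Fin n) (Fin n) ℤ}

lemma colPS_mem (hA : IsASM n A) (m : ℕ) (c : Fin n) :
    colPS A m c = 0 ∨ colPS A m c = 1 :=
  psum_mem (fun k => hA.1 k c) (hA.2.2.2.2 c) m

lemma card_rowSet (hA : IsASM n A) {i : ℕ} (hi : i < n) : (rowSet A i).card = i + 1 := by
  rw [rowSet, Finset.card_image_of_injective _ succ_inj']
  have hz : (((univ.filter (fun c : Fin n => colPS A (i + 1) c = 1)).card : ℤ))
      = ∑ c, colPS A (i + 1) c :=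
    card_filter_eq_sum univ _ (fun c _ => colPS_mem hA (i + 1) c)
  have hswap : ∑ c : Fin n, colPS A (i + 1) c = ((i + 1 : ℕ) : ℤ) := by
    unfold colPS psum
    rw [Finset.sum_comm]
    rw [Finset.sum_congr rfl (fun k _ => hA.2.1 k), Finset.sum_const,
      card_filter_lt (by omega), nsmul_eq_mul, mul_one]
  exact_mod_cast hz.trans hswap

lemma count_rowSet (hA : IsASM n A) {i : ℕ} (hi : i < n) (m : ℕ) :
    ((((rowSet A i).filter (· ≤ m)).card : ℤ))
      = ∑ c ∈ univ.filter (fun c : Fin n => (c : ℕ) < m), colPS A (i + 1) c := by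
  rw [rowSet, Finset.filter_image, Finset.card_image_of_injective _ succ_inj',
    Finset.filter_filter]
  rw [← card_filter_eq_sum _ _ (fun c hc => colPS_mem hA (i + 1) c), Finset.filter_filter]
  have hset : univ.filter (fun c : Fin n => colPS A (i + 1) c = 1 ∧ (c : ℕ) + 1 ≤ m)
      = univ.filter (fun c : Fin n => (c : ℕ) < m ∧ colPS A (i + 1) c = 1) := by
    ext c
    simp only [mem_filter, mem_univ, true_and]
    constructor
    · rintro ⟨h1, h2⟩; exact ⟨by omega, h1⟩
    · rintro ⟨h1, h2⟩; exact ⟨h2, by omega⟩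
  rw [hset]

lemma counts_step (hA : IsASM n A) {i : ℕ} (hi : i + 1 < n) (m : ℕ) :
    ((rowSet A i).filter (· ≤ m)).card ≤ ((rowSet A (i + 1)).filter (· ≤ m)).card ∧
      ((rowSet A (i + 1)).filter (· ≤ m)).card ≤ ((rowSet A i).filter (· ≤ m)).card + 1 := by
  have h1 := count_rowSet hA (show i < n by omega) m
  have h2 := count_rowSet hA hi m
  have hdiff : ∑ c ∈ univ.filter (fun c : Fin n => (c : ℕ) < m), colPS A (i + 1 + 1) c
      = (∑ c ∈ univ.filter (fun c : Fin n => (c : ℕ) < m), colPS A (i + 1) c)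
        + psum n (fun c => A ⟨i + 1, hi⟩ c) m := by
    unfold colPS psum
    rw [← Finset.sum_add_distrib]
    apply Finset.sum_congr rfl
    intro c _
    exact psum_succ (fun k => A k c) hi
  have hrow := psum_mem (fun c => hA.1 ⟨i + 1, hi⟩ c) (hA.2.2.2.1 ⟨i + 1, hi⟩) m
  rcases hrow with h | h <;> rw [h] at hdiff <;> constructor <;> omega

lemma rowSet_interlace (hA : IsASM n A) {i : ℕ} (hi : i + 1 < n) :
    ∀ j < i + 1, enum (rowSet A (i + 1)) j ≤ enum (rowSet A i) j ∧
      enum (rowSet A i) j ≤ enum (rowSet A (i + 1)) (j + 1) :=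
  interlace_of_counts (card_rowSet hA hi) (card_rowSet hA (by omega))
    (fun m => (counts_step hA hi m).1) (fun m => (counts_step hA hi m).2)

lemma triangleOf_pos (A : Matrix (Fin n) (Fin n) ℤ) {i j : ℕ} (h1 : i < n) (h2 : j ≤ i) :
    triangleOf A i j = enum (rowSet A i) j := by
  rw [triangleOf_eq, if_pos ⟨h1, h2⟩]

lemma mapsTo (hA : IsASM n A) :
    IsMonotoneTriangle n (triangleOf A) ∧ Normalized n (triangleOf A) := by
  constructor
  · refine ⟨?_, ?_, ?_, ?_⟩
    · intro i j j' hi hjj' hj'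
      rw [triangleOf_pos A hi (by omega), triangleOf_pos A hi hj']
      have hs := enum_strictOn (rowSet A i)
      rw [card_rowSet hA hi] at hs
      exact hs j j' hjj' (by omega)
    · intro i i' j hii' hi' hj
      have key : ∀ d, i + d < n → triangleOf A (i + d) j ≤ triangleOf A i j := by
        intro d
        induction d with
        | zero => intro _; exact le_rfl
        | succ d ihd =>
          intro h
          have step : triangleOf A (i + d + 1) j ≤ triangleOf A (i + d) j := by
            rw [triangleOf_pos A (show i + d + 1 < n by omega) (by omega),
              triangleOf_pos A (show i + d < n by omega) (by omega)]
            exact (rowSet_interlace hA (show (i + d) + 1 < n by omega) j (by omega)).1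
          exact le_trans step (ihd (by omega))
      have h' := key (i' - i) (by omega)
      rwa [show i + (i' - i) = i' by omega] at h'
    · intro i j d
      induction d with
      | zero => intro _ _; simp
      | succ d ihd =>
        intro hd hj
        have step : triangleOf A (i + d) (j + d) ≤ triangleOf A (i + d + 1) (j + d + 1) := by
          rw [triangleOf_pos A (show i + d < n by omega) (by omega),
            triangleOf_pos A (show i + d + 1 < n by omega) (by omega)]
          exact (rowSet_interlace hA (show (i + d) + 1 < n by omega) (j + d) (by omega)).2
        have h' := le_trans (ihd (by omega) hj) step
        rwa [show i + (d + 1) = i + d + 1 by omega, show j + (d + 1) = j + d + 1 by omega]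
    · intro j hj
      have hn : 0 < n := by omega
      have hcol : ∀ c : Fin n, colPS A (n - 1 + 1) c = 1 := by
        intro c
        rw [show n - 1 + 1 = n by omega]
        unfold colPS
        rw [psum_of_ge _ le_rfl]
        exact hA.2.2.1 c
      have hrs : (range n).image (fun k => k + 1) = rowSet A (n - 1) := by
        rw [rowSet, Finset.filter_true_of_mem (fun c _ => hcol c)]
        ext x
        simp only [mem_image, mem_range, mem_univ, true_and]
        constructor
        · rintro ⟨k, hk, rfl⟩; exact ⟨⟨k, hk⟩, rfl⟩
        · rintro ⟨c, rfl⟩; exact ⟨(c : ℕ), c.isLt, rfl⟩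
      rw [triangleOf_pos A (by omega) (by omega)]
      exact enum_eq_of_image (fun a b hab _ => by omega) hrs j hj
  · intro i j hij
    rw [triangleOf_eq, if_neg (by omega)]

lemma rowSet_eq_image (hA : IsASM n A) {i : ℕ} (hi : i < n) :
    rowSet A i = (range (i + 1)).image (fun j => triangleOf A i j) := by
  have he := enum_image (rowSet A i)
  rw [card_rowSet hA hi] at he
  rw [← he]
  apply Finset.image_congr
  intro j hj
  simp only [coe_range, Set.mem_Iio] at hj
  exact (triangleOf_pos A hi (by omega)).symm

lemma injOn : Set.InjOn (triangleOf (n := n)) {A | IsASM n A} := by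
  intro A hA A' hA' h
  simp only [Set.mem_setOf_eq] at hA hA'
  have hrs : ∀ i : ℕ, i < n → rowSet A i = rowSet A' i := by
    intro i hi
    rw [rowSet_eq_image hA hi, rowSet_eq_image hA' hi, h]
  have hmem : ∀ (B : Matrix (Fin n) (Fin n) ℤ) (i : ℕ) (c : Fin n),
      colPS B (i + 1) c = 1 ↔ (c : ℕ) + 1 ∈ rowSet B i := by
    intro B i c
    rw [rowSet]
    simp only [mem_image, mem_filter, mem_univ, true_and]
    constructor
    · intro h1; exact ⟨c, h1, rfl⟩
    · rintro ⟨c', h1, hc⟩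
      rwa [← succ_inj' hc]
  have hcol : ∀ (i : ℕ), i < n → ∀ c : Fin n, colPS A (i + 1) c = colPS A' (i + 1) c := by
    intro i hi c
    rcases colPS_mem hA (i + 1) c with h1 | h1 <;>
      rcases colPS_mem hA' (i + 1) c with h2 | h2
    · rw [h1, h2]
    · exfalso
      have := (hmem A' i c).mp h2
      rw [← hrs i hi] at this
      rw [(hmem A i c).mpr this] at h1
      omega
    · exfalso
      have := (hmem A i c).mp h1
      rw [hrs i hi] at this
      rw [(hmem A' i c).mpr this] at h2
      omega
    · rw [h1, h2]
  have hstep : ∀ (B : Matrix (Fin n) (Fin n) ℤ) (k c : Fin n),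
      B k c = colPS B ((k : ℕ) + 1) c - colPS B (k : ℕ) c := by
    intro B k c
    unfold colPS
    rw [psum_succ _ k.isLt, Fin.eta]
    ring
  ext k c
  rw [hstep A, hstep A']
  rcases Nat.eq_zero_or_pos (k : ℕ) with h0 | hpos
  · rw [h0, hcol 0 (by have := k.isLt; omega) c,
      show colPS A 0 c = 0 from psum_zero n _, show colPS A' 0 c = 0 from psum_zero n _]
  · have e1 := hcol (k : ℕ) k.isLt c
    have e2 := hcol ((k : ℕ) - 1) (by have := k.isLt; omega) c
    rw [show (k : ℕ) - 1 + 1 = (k : ℕ) by omega] at e2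
    rw [e1, e2]


open Finset

variable {n : ℕ}

/-- the set of entries in row `i` of the triangle `t` -/
def mtR (t : ℕ → ℕ → ℕ) (i : ℕ) : Finset ℕ := (range (i + 1)).image (t i)

/-- indicator of row-`i` membership -/
def mtChi (n : ℕ) (t : ℕ → ℕ → ℕ) (i : ℕ) (c : Fin n) : ℤ :=
  if (c : ℕ) + 1 ∈ mtR t i then 1 else 0

/-- the candidate ASM built from a monotone triangle -/
def mtA (n : ℕ) (t : ℕ → ℕ → ℕ) : Matrix (Fin n) (Fin n) ℤ :=
  fun k c => mtChi n t (k : ℕ) c - (if (k : ℕ) = 0 then 0 else mtChi n t ((k : ℕ) - 1) c)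

variable {t : ℕ → ℕ → ℕ}

lemma mt_bounds (hmt : IsMonotoneTriangle n t) {i j : ℕ} (hi : i < n) (hj : j ≤ i) :
    j + 1 ≤ t i j ∧ t i j ≤ n := by
  obtain ⟨hrow, hcolm, hdiag, hbot⟩ := hmt
  constructor
  · have h1 := hcolm i (n - 1) j (by omega) (by omega) hj
    rw [hbot j (by omega)] at h1
    exact h1
  · have h2 := hdiag i j (n - 1 - i) (by omega) hj
    rw [show i + (n - 1 - i) = n - 1 by omega] at h2
    rw [hbot (j + (n - 1 - i)) (by omega)] at h2
    omega

lemma mt_strictOn (hmt : IsMonotoneTriangle n t) {i : ℕ} (hi : i < n) :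
    StrictOn (t i) (i + 1) :=
  fun a b hab hb => hmt.1 i a b hi hab (by omega)

lemma mtR_card (hmt : IsMonotoneTriangle n t) {i : ℕ} (hi : i < n) :
    (mtR t i).card = i + 1 := by
  rw [mtR, Finset.card_image_of_injOn (mt_strictOn hmt hi).injOn, Finset.card_range]

lemma mtR_mem_bounds (hmt : IsMonotoneTriangle n t) {i : ℕ} (hi : i < n) :
    ∀ x ∈ mtR t i, 1 ≤ x ∧ x ≤ n := by
  intro x hx
  rw [mtR] at hx
  simp only [mem_image, mem_range] at hx
  obtain ⟨jj, hjj, rfl⟩ := hx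
  have := mt_bounds hmt hi (show jj ≤ i by omega)
  omega

lemma mtR_enum (hmt : IsMonotoneTriangle n t) {i j : ℕ} (hi : i < n) (hj : j < i + 1) :
    enum (mtR t i) j = t i j :=
  enum_eq_of_image (mt_strictOn hmt hi) rfl j hj

lemma mtChi_filter (hmt : IsMonotoneTriangle n t) {i : ℕ} (hi : i < n) (m : ℕ) :
    (univ.filter (fun c : Fin n => (c : ℕ) < m ∧ (c : ℕ) + 1 ∈ mtR t i)).image
        (fun c : Fin n => (c : ℕ) + 1)
      = (mtR t i).filter (· ≤ m) := by
  ext x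
  simp only [mem_image, mem_filter, mem_univ, true_and]
  constructor
  · rintro ⟨c, ⟨h1, h2⟩, rfl⟩
    exact ⟨h2, by omega⟩
  · rintro ⟨hx, hxm⟩
    have hxn := mtR_mem_bounds hmt hi x hx
    refine ⟨⟨x - 1, by omega⟩, ⟨show x - 1 < m by omega, ?_⟩, show x - 1 + 1 = x by omega⟩
    show x - 1 + 1 ∈ mtR t i
    rw [show x - 1 + 1 = x by omega]
    exact hx

lemma mtChi_psum (hmt : IsMonotoneTriangle n t) {i : ℕ} (hi : i < n) (m : ℕ) :
    ∑ c ∈ univ.filter (fun c : Fin n => (c : ℕ) < m), mtChi n t i c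
      = (((mtR t i).filter (· ≤ m)).card : ℤ) := by
  unfold mtChi
  rw [Finset.sum_boole, Finset.filter_filter]
  rw [← mtChi_filter hmt hi m, Finset.card_image_of_injective _ succ_inj']

lemma mtR_filter_top (hmt : IsMonotoneTriangle n t) {i : ℕ} (hi : i < n) :
    ((mtR t i).filter (· ≤ n)).card = i + 1 := by
  rw [Finset.filter_true_of_mem (fun x hx => (mtR_mem_bounds hmt hi x hx).2),
    mtR_card hmt hi]

lemma mtChi_sum (hmt : IsMonotoneTriangle n t) {i : ℕ} (hi : i < n) :
    ∑ c : Fin n, mtChi n t i c = ((i + 1 : ℕ) : ℤ) := by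
  have h := mtChi_psum hmt hi n
  rw [Finset.filter_true_of_mem (fun c _ => c.isLt), mtR_filter_top hmt hi] at h
  exact h

lemma mtA_colPS (hmt : IsMonotoneTriangle n t) :
    ∀ m, m ≤ n → ∀ c : Fin n,
      colPS (mtA n t) m c = if m = 0 then 0 else mtChi n t (m - 1) c := by
  intro m
  induction m with
  | zero => intro _ c; rw [if_pos rfl]; exact psum_zero n _
  | succ m ih =>
    intro hm c
    have hmn : m < n := by omega
    have hcol : colPS (mtA n t) (m + 1) c
        = colPS (mtA n t) m c + mtA n t ⟨m, hmn⟩ c :=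
      psum_succ (fun k => mtA n t k c) hmn
    rw [hcol, ih (by omega) c, if_neg (Nat.succ_ne_zero m),
      show m + 1 - 1 = m by omega]
    rcases Nat.eq_zero_or_pos m with rfl | hpos
    · rw [if_pos rfl]
      show (0 : ℤ) + mtA n t ⟨0, hmn⟩ c = mtChi n t 0 c
      simp [mtA]
    · rw [if_neg (by omega)]
      show mtChi n t (m - 1) c + mtA n t ⟨m, hmn⟩ c = mtChi n t m c
      simp only [mtA, Fin.val_mk]
      rw [if_neg (by omega)]
      ring

lemma mtA_colPS_top (hmt : IsMonotoneTriangle n t) (c : Fin n) :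
    colPS (mtA n t) n c = 1 := by
  have hn : 0 < n := c.pos
  rw [mtA_colPS hmt n le_rfl c, if_neg (by omega), mtChi, if_pos]
  exact mem_image.mpr ⟨(c : ℕ), mem_range.mpr (by omega), hmt.2.2.2 (c : ℕ) c.isLt⟩

lemma mtA_entries (k c : Fin n) :
    mtA n t k c = -1 ∨ mtA n t k c = 0 ∨ mtA n t k c = 1 := by
  simp only [mtA, mtChi]
  split_ifs <;> norm_num

lemma mtA_rowsum (hmt : IsMonotoneTriangle n t) (k : Fin n) :
    ∑ c, mtA n t k c = 1 := by
  simp only [mtA]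
  rw [Finset.sum_sub_distrib]
  rcases Nat.eq_zero_or_pos (k : ℕ) with h0 | hpos
  · rw [h0, mtChi_sum hmt (show 0 < n by have := k.isLt; omega)]
    simp
  · rw [Finset.sum_congr rfl (fun c _ => if_neg (show ¬(k : ℕ) = 0 by omega)),
      mtChi_sum hmt k.isLt,
      mtChi_sum hmt (show (k : ℕ) - 1 < n by have := k.isLt; omega)]
    have hk1 : 1 ≤ (k : ℕ) := hpos
    omega

lemma mtA_colsum (hmt : IsMonotoneTriangle n t) (c : Fin n) :
    ∑ k, mtA n t k c = 1 := by
  have h2 : colPS (mtA n t) n c = ∑ k, mtA n t k c := psum_of_ge _ le_rfl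
  rw [← h2, mtA_colPS_top hmt c]

lemma mtA_colalt (hmt : IsMonotoneTriangle n t) (c : Fin n) :
    Alternating n (fun k => mtA n t k c) := by
  apply alternating_of_psum
  · intro m hm
    show colPS (mtA n t) m c = 0 ∨ colPS (mtA n t) m c = 1
    rw [mtA_colPS hmt m hm c]
    split
    · left; rfl
    · unfold mtChi; split <;> simp
  · exact mtA_colPS_top hmt c

lemma mtA_rowpsum (hmt : IsMonotoneTriangle n t) (k : Fin n) (m : ℕ) :
    psum n (fun c => mtA n t k c) m
      = (((mtR t (k : ℕ)).filter (· ≤ m)).card : ℤ)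
        - (if (k : ℕ) = 0 then 0
            else (((mtR t ((k : ℕ) - 1)).filter (· ≤ m)).card : ℤ)) := by
  unfold psum
  simp only [mtA]
  rw [Finset.sum_sub_distrib]
  by_cases hk : (k : ℕ) = 0
  · rw [if_pos hk, mtChi_psum hmt k.isLt m]
    simp [hk]
  · rw [if_neg hk, mtChi_psum hmt k.isLt m,
      Finset.sum_congr rfl (fun c _ => if_neg hk),
      mtChi_psum hmt (show (k : ℕ) - 1 < n by have := k.isLt; omega) m]

lemma mtR_interlace (hmt : IsMonotoneTriangle n t) {k : ℕ} (hk1 : 1 ≤ k) (hk2 : k < n)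
    (m : ℕ) :
    ((mtR t (k - 1)).filter (· ≤ m)).card ≤ ((mtR t k).filter (· ≤ m)).card ∧
      ((mtR t k).filter (· ≤ m)).card ≤ ((mtR t (k - 1)).filter (· ≤ m)).card + 1 := by
  apply counts_of_interlace (s := k)
  · rw [mtR_card hmt hk2]
  · rw [mtR_card hmt (by omega)]; omega
  · intro j hj
    rw [mtR_enum hmt hk2 (by omega), mtR_enum hmt (by omega) (by omega)]
    exact hmt.2.1 (k - 1) k j (by omega) hk2 (by omega)
  · intro j hj
    rw [mtR_enum hmt hk2 (by omega), mtR_enum hmt (by omega) (by omega)]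
    have h := hmt.2.2.1 (k - 1) j 1 (by omega) (by omega)
    rwa [show k - 1 + 1 = k by omega] at h

lemma mtA_rowalt (hmt : IsMonotoneTriangle n t) (k : Fin n) :
    Alternating n (fun c => mtA n t k c) := by
  apply alternating_of_psum
  · intro m _
    rw [mtA_rowpsum hmt k m]
    by_cases hk : (k : ℕ) = 0
    · rw [if_pos hk, hk]
      have hb : ((mtR t 0).filter (· ≤ m)).card ≤ 1 := by
        have h1 := Finset.card_filter_le (mtR t 0) (· ≤ m)
        have h2 := mtR_card hmt (show 0 < n by have := k.isLt; omega)
        rw [show (0 : ℕ) + 1 = 1 by rfl] at h2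
        omega
      interval_cases h : ((mtR t 0).filter (· ≤ m)).card <;> simp
    · rw [if_neg hk]
      have := mtR_interlace hmt (by omega) k.isLt m
      rcases this with ⟨ha, hb⟩
      by_cases heq : ((mtR t (k : ℕ)).filter (· ≤ m)).card
          = ((mtR t ((k : ℕ) - 1)).filter (· ≤ m)).card
      · left; rw [heq]; ring
      · right
        have : ((mtR t (k : ℕ)).filter (· ≤ m)).card
            = ((mtR t ((k : ℕ) - 1)).filter (· ≤ m)).card + 1 := by omega
        rw [this]
        push_cast
        ring
  · rw [mtA_rowpsum hmt k n]
    by_cases hk : (k : ℕ) = 0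
    · rw [if_pos hk, hk, mtR_filter_top hmt (show 0 < n by have := k.isLt; omega)]
      norm_num
    · rw [if_neg hk, mtR_filter_top hmt k.isLt,
        mtR_filter_top hmt (show (k : ℕ) - 1 < n by have := k.isLt; omega)]
      have hk1 : 1 ≤ (k : ℕ) := by omega
      push_cast
      omega

lemma mtA_isASM (hmt : IsMonotoneTriangle n t) : IsASM n (mtA n t) :=
  ⟨fun k c => mtA_entries k c, mtA_rowsum hmt, mtA_colsum hmt,
    mtA_rowalt hmt, mtA_colalt hmt⟩

lemma mtA_rowSet (hmt : IsMonotoneTriangle n t) {i : ℕ} (hi : i < n) :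
    rowSet (mtA n t) i = mtR t i := by
  rw [rowSet]
  have hchi : ∀ c : Fin n, colPS (mtA n t) (i + 1) c = mtChi n t i c := by
    intro c
    rw [mtA_colPS hmt (i + 1) (by omega) c, if_neg (by omega),
      show i + 1 - 1 = i by omega]
  have hset : univ.filter (fun c : Fin n => colPS (mtA n t) (i + 1) c = 1)
      = univ.filter (fun c : Fin n => (c : ℕ) < n ∧ (c : ℕ) + 1 ∈ mtR t i) := by
    ext c
    simp only [mem_filter, mem_univ, true_and, hchi c, mtChi]
    constructor
    · intro h
      by_cases hmem : (c : ℕ) + 1 ∈ mtR t i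
      · exact ⟨c.isLt, hmem⟩
      · rw [if_neg hmem] at h; omega
    · rintro ⟨-, hmem⟩
      rw [if_pos hmem]
  rw [hset, mtChi_filter hmt hi n,
    Finset.filter_true_of_mem (fun x hx => (mtR_mem_bounds hmt hi x hx).2)]

lemma mtA_triangle (hmt : IsMonotoneTriangle n t) (hnorm : Normalized n t) :
    triangleOf (mtA n t) = t := by
  funext i j
  rw [triangleOf_eq]
  by_cases hij : i < n ∧ j ≤ i
  · rw [if_pos hij, mtA_rowSet hmt hij.1, mtR_enum hmt hij.1 (by omega)]
  · rw [if_neg hij]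
    exact (hnorm i j (by omega)).symm

end AsmMT

/-- The map recording, for each `i`, the columns with partial sum `1` down to row `i`
is a bijection from `n × n` alternating sign matrices onto monotone triangles of
order `n`. -/
theorem asm_bij_monotone_triangles (n : ℕ) :
    Set.BijOn (triangleOf (n := n)) {A | IsASM n A}
      {t | IsMonotoneTriangle n t ∧ Normalized n t} := by
  refine ⟨?_, AsmMT.injOn, ?_⟩
  · intro A hA
    exact AsmMT.mapsTo hA
  · intro t ht
    obtain ⟨hmt, hnorm⟩ := ht
    exact ⟨AsmMT.mtA n t, AsmMT.mtA_isASM hmt, AsmMT.mtA_triangle hmt hnorm⟩
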